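/- Let g : ℝ² → ℝ≥0 be measurable with g, g|x|² ∈ L¹(ℝ²). Then ∫ g(x) log⁻ g(x) dx ≤ (1/2) ∫ g(x)|x|² dx + log(2π) ∫ g(x) dx + 1/e, where log⁻ g = max(−log g, 0) is the negative part of the logarithm (with the convention g log⁻ g = 0 where g = 0). -/

import Mathlib

open MeasureTheory Real

/-- Pointwise bound: `t·log⁻ t ≤ t·(s/2 + log(2π)) + (2π)⁻¹ e^{-s/2} / e`. -/
lemma pointwise_neg_entropy_bound (t s : ℝ) (ht : 0 ≤ t) (hs : 0 ≤ s) :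
    t * max (-Real.log t) 0 ≤
      t * (s / 2 + Real.log (2 * Real.pi)) + (2 * Real.pi)⁻¹ * Real.exp (-s / 2) / Real.exp 1 := by
  have hpi : (0:ℝ) < 2 * Real.pi := by positivity
  have hlogpi : 0 ≤ Real.log (2 * Real.pi) := by
    apply Real.log_nonneg
    nlinarith [Real.pi_gt_three]
  set M : ℝ := (2 * Real.pi)⁻¹ * Real.exp (-s / 2) with hM
  have hMpos : 0 < M := by positivity
  have hRHS0 : 0 ≤ t * (s / 2 + Real.log (2 * Real.pi)) := by positivity
  rcases le_or_gt (-Real.log t) 0 with h | h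
  · rw [max_eq_right h]
    have : 0 ≤ M / Real.exp 1 := by positivity
    simp only [mul_zero]
    linarith
  · rw [max_eq_left h.le]
    rcases eq_or_lt_of_le ht with h0 | h0
    · simp [← h0]
      positivity
    · -- t > 0, log t < 0
      have hlogM : Real.log M = -s / 2 - Real.log (2 * Real.pi) := by
        rw [hM, Real.log_mul (by positivity) (Real.exp_ne_zero _), Real.log_inv, Real.log_exp]
        ring
      have key : Real.log (M / t) ≤ M / t / Real.exp 1 := by
        have h1 : Real.log (M / t / Real.exp 1) ≤ M / t / Real.exp 1 - 1 :=
          Real.log_le_sub_one_of_pos (by positivity)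
        have h2 : Real.log (M / t / Real.exp 1) = Real.log (M / t) - 1 := by
          rw [Real.log_div (by positivity) (Real.exp_ne_zero _), Real.log_exp]
        linarith
      have hlogdiv : Real.log (M / t) = Real.log M - Real.log t :=
        Real.log_div (ne_of_gt hMpos) (ne_of_gt h0)
      -- t * (-log t) = t * log(M/t) + t*(s/2 + log 2π) ≤ M/e + ...
      have : t * Real.log (M / t) ≤ M / Real.exp 1 := by
        calc t * Real.log (M / t) ≤ t * (M / t / Real.exp 1) :=
              mul_le_mul_of_nonneg_left key ht
          _ = M / Real.exp 1 := by field_simp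
      have expand : t * (-Real.log t) =
          t * Real.log (M / t) + t * (s / 2 + Real.log (2 * Real.pi)) := by
        rw [hlogdiv, hlogM]; ring
      rw [expand] at *
      linarith [this]

/-- Control of the negative part of the entropy of a nonnegative density on the plane
by its second moment and mass: `∫ g log⁻ g ≤ (1/2) ∫ g |x|² + log(2π) ∫ g + 1/e`. -/
theorem negative_entropy_bound
    (g : EuclideanSpace ℝ (Fin 2) → ℝ) (hg : ∀ x, 0 ≤ g x)
    (hmeas : Measurable g)
    (hint : Integrable g)
    (hmom : Integrable (fun x => g x * ‖x‖ ^ 2))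
    (hent : Integrable (fun x => g x * max (-Real.log (g x)) 0)) :
    ∫ x, g x * max (-Real.log (g x)) 0 ≤
      (1 / 2) * (∫ x, g x * ‖x‖ ^ 2) + Real.log (2 * Real.pi) * (∫ x, g x)
        + 1 / Real.exp 1 := by
  have hpi : (0:ℝ) < 2 * Real.pi := by positivity
  -- the Gaussian
  have hgauss_int : Integrable (fun x : EuclideanSpace ℝ (Fin 2) =>
      Real.exp (-(1/2 : ℝ) * ‖x‖ ^ 2)) := by
    have := (GaussianFourier.integrable_cexp_neg_mul_sq_norm_add (V := EuclideanSpace ℝ (Fin 2))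
        (b := (1/2 : ℂ)) (by norm_num) 0 0).norm
    convert this using 2 with x
    rw [show ((-(1/2 : ℂ)) * (‖x‖:ℂ) ^ 2 + 0 * ((inner ℝ (0 : EuclideanSpace ℝ (Fin 2)) x : ℝ):ℂ)) = ((-(1/2) * ‖x‖^2 : ℝ) : ℂ) by push_cast; ring, Complex.norm_exp, Complex.ofReal_re]
  have hgauss_val : (∫ x : EuclideanSpace ℝ (Fin 2), Real.exp (-(1/2 : ℝ) * ‖x‖ ^ 2))
      = 2 * Real.pi := by
    rw [GaussianFourier.integral_rexp_neg_mul_sq_norm (by norm_num : (0:ℝ) < 1/2)]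
    have : Module.finrank ℝ (EuclideanSpace ℝ (Fin 2)) = 2 := by
      simp [finrank_euclideanSpace]
    rw [this]
    rw [show Real.pi / (1/2) = 2 * Real.pi by ring]
    norm_num
  set F : EuclideanSpace ℝ (Fin 2) → ℝ := fun x =>
    g x * (‖x‖ ^ 2 / 2 + Real.log (2 * Real.pi))
      + (2 * Real.pi)⁻¹ * Real.exp (-‖x‖ ^ 2 / 2) / Real.exp 1 with hF
  have hFint : Integrable F := by
    apply Integrable.add
    · have : (fun x => g x * (‖x‖ ^ 2 / 2 + Real.log (2 * Real.pi)))
          = fun x => (1/2 : ℝ) * (g x * ‖x‖ ^ 2) + Real.log (2 * Real.pi) * g x := by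
        funext x; ring
      rw [this]
      exact (hmom.const_mul _).add (hint.const_mul _)
    · have : (fun x : EuclideanSpace ℝ (Fin 2) =>
          (2 * Real.pi)⁻¹ * Real.exp (-‖x‖ ^ 2 / 2) / Real.exp 1)
          = fun x => ((2 * Real.pi)⁻¹ / Real.exp 1) * Real.exp (-(1/2:ℝ) * ‖x‖ ^ 2) := by
        funext x; rw [neg_div]; ring_nf
      rw [this]
      exact hgauss_int.const_mul _
  have hmono : ∫ x, g x * max (-Real.log (g x)) 0 ≤ ∫ x, F x := by
    apply integral_mono hent hFint
    intro x
    exact pointwise_neg_entropy_bound (g x) (‖x‖ ^ 2) (hg x) (by positivity)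
  refine hmono.trans (le_of_eq ?_)
  rw [hF]
  rw [integral_add ?h1 ?h2]
  case h1 =>
    have : (fun x => g x * (‖x‖ ^ 2 / 2 + Real.log (2 * Real.pi)))
        = fun x => (1/2 : ℝ) * (g x * ‖x‖ ^ 2) + Real.log (2 * Real.pi) * g x := by
      funext x; ring
    rw [this]
    exact (hmom.const_mul _).add (hint.const_mul _)
  case h2 =>
    have : (fun x : EuclideanSpace ℝ (Fin 2) =>
        (2 * Real.pi)⁻¹ * Real.exp (-‖x‖ ^ 2 / 2) / Real.exp 1)
        = fun x => ((2 * Real.pi)⁻¹ / Real.exp 1) * Real.exp (-(1/2:ℝ) * ‖x‖ ^ 2) := by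
      funext x; rw [neg_div]; ring_nf
    rw [this]
    exact hgauss_int.const_mul _
  have e1 : ∫ x, g x * (‖x‖ ^ 2 / 2 + Real.log (2 * Real.pi))
      = (1/2) * (∫ x, g x * ‖x‖ ^ 2) + Real.log (2 * Real.pi) * (∫ x, g x) := by
    have : (fun x => g x * (‖x‖ ^ 2 / 2 + Real.log (2 * Real.pi)))
        = fun x => (1/2 : ℝ) * (g x * ‖x‖ ^ 2) + Real.log (2 * Real.pi) * g x := by
      funext x; ring
    rw [this, integral_add (hmom.const_mul _) (hint.const_mul _),
      integral_const_mul, integral_const_mul]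
  have e2 : ∫ x : EuclideanSpace ℝ (Fin 2),
      (2 * Real.pi)⁻¹ * Real.exp (-‖x‖ ^ 2 / 2) / Real.exp 1 = 1 / Real.exp 1 := by
    have : (fun x : EuclideanSpace ℝ (Fin 2) =>
        (2 * Real.pi)⁻¹ * Real.exp (-‖x‖ ^ 2 / 2) / Real.exp 1)
        = fun x => ((2 * Real.pi)⁻¹ / Real.exp 1) * Real.exp (-(1/2:ℝ) * ‖x‖ ^ 2) := by
      funext x; rw [neg_div]; ring_nf
    rw [this, integral_const_mul, hgauss_val]
    field_simp
  rw [e1, e2]
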